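/- Let β be the Tribonacci number (β³ = β² + β + 1). The transformation τ(z) = βz − ⌊((β+1)/2)z + 1/2⌋ maps [−β/(β+1), β/(β+1)) into itself, and for every z in this interval the digits yⱼ = ⌊((β+1)/2)τ^{j−1}(z) + 1/2⌋ lie in {−1,0,1} and satisfy z = Σ_{j≥1} yⱼ β^{-j}. -/

import Mathlib

theorem stmt_12 (β : ℝ) (hβ : 1 < β) (hcube : β ^ 3 = β ^ 2 + β + 1)
    (τ : ℝ → ℝ) (hτ : ∀ z, τ z = β * z - ⌊(β + 1) / 2 * z + 1 / 2⌋)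
    (I : Set ℝ) (hI : I = Set.Ico (-(β / (β + 1))) (β / (β + 1))) :
    (∀ z ∈ I, τ z ∈ I) ∧
    ∀ z ∈ I,
      (∀ j : ℕ, 1 ≤ j →
        (⌊(β + 1) / 2 * (τ^[j - 1] z) + 1 / 2⌋ = -1 ∨
         ⌊(β + 1) / 2 * (τ^[j - 1] z) + 1 / 2⌋ = 0 ∨
         ⌊(β + 1) / 2 * (τ^[j - 1] z) + 1 / 2⌋ = 1)) ∧
      z = ∑' j : ℕ, (⌊(β + 1) / 2 * (τ^[j] z) + 1 / 2⌋ : ℝ) * β ^ (-((j : ℤ) + 1)) := by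
  subst hI
  have hβ0 : (0:ℝ) < β := by linarith
  have hβ2 : β < 2 := by nlinarith [sq_nonneg (β - 2), sq_nonneg (β - 1), sq_nonneg β]
  have hb1 : (0:ℝ) < β + 1 := by linarith
  -- translate membership into polynomial inequalities
  have hmem : ∀ z : ℝ, z ∈ Set.Ico (-(β / (β + 1))) (β / (β + 1)) ↔
      (-β ≤ z * (β + 1) ∧ z * (β + 1) < β) := by
    intro z
    constructor
    · rintro ⟨h1, h2⟩
      rw [← neg_div] at h1
      exact ⟨(div_le_iff₀ hb1).mp h1, (lt_div_iff₀ hb1).mp h2⟩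
    · rintro ⟨h1, h2⟩
      constructor
      · rw [← neg_div]; exact (div_le_iff₀ hb1).mpr h1
      · exact (lt_div_iff₀ hb1).mpr h2
  -- digits are in {-1,0,1}
  have hdig : ∀ z : ℝ, z ∈ Set.Ico (-(β / (β + 1))) (β / (β + 1)) →
      (⌊(β + 1) / 2 * z + 1 / 2⌋ = -1 ∨ ⌊(β + 1) / 2 * z + 1 / 2⌋ = 0 ∨
       ⌊(β + 1) / 2 * z + 1 / 2⌋ = 1) := by
    intro z hz
    obtain ⟨h1, h2⟩ := (hmem z).mp hz
    have hlb : (-1 : ℤ) ≤ ⌊(β + 1) / 2 * z + 1 / 2⌋ := by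
      rw [Int.le_floor]
      push_cast
      nlinarith
    have hub : ⌊(β + 1) / 2 * z + 1 / 2⌋ < 2 := by
      rw [Int.floor_lt]
      push_cast
      nlinarith
    omega
  -- invariance
  have hmap : ∀ z ∈ Set.Ico (-(β / (β + 1))) (β / (β + 1)),
      τ z ∈ Set.Ico (-(β / (β + 1))) (β / (β + 1)) := by
    intro z hz
    obtain ⟨h1, h2⟩ := (hmem z).mp hz
    have hfl := Int.floor_le ((β + 1) / 2 * z + 1 / 2)
    have hfu := Int.lt_floor_add_one ((β + 1) / 2 * z + 1 / 2)
    rw [hmem, hτ z]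
    rcases hdig z hz with h | h | h <;> rw [h] at hfl hfu ⊢ <;> push_cast at hfl hfu ⊢ <;>
      constructor <;> nlinarith
  refine ⟨hmap, fun z hz => ?_⟩
  have horb : ∀ n : ℕ, τ^[n] z ∈ Set.Ico (-(β / (β + 1))) (β / (β + 1)) := by
    intro n
    induction n with
    | zero => simpa using hz
    | succ n ih => rw [Function.iterate_succ_apply']; exact hmap _ ih
  refine ⟨fun j _ => hdig _ (horb (j - 1)), ?_⟩
  have hβne : β ≠ 0 := ne_of_gt hβ0
  -- telescoping partial sums
  have key : ∀ n : ℕ, ∑ j ∈ Finset.range n,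
      (⌊(β + 1) / 2 * (τ^[j] z) + 1 / 2⌋ : ℝ) * (β ^ (j + 1))⁻¹
      = z - (β ^ n)⁻¹ * τ^[n] z := by
    intro n
    induction n with
    | zero => simp
    | succ n ih =>
      rw [Finset.sum_range_succ, ih, Function.iterate_succ_apply', hτ]
      have hpn : β ^ n ≠ 0 := pow_ne_zero _ hβne
      field_simp
      ring
  -- bound on orbit
  have horb1 : ∀ n : ℕ, |τ^[n] z| ≤ 1 := by
    intro n
    obtain ⟨h1, h2⟩ := horb n
    have hc1 : β / (β + 1) < 1 := by rw [div_lt_one hb1]; linarith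
    rw [abs_le]
    constructor <;> nlinarith
  -- summability
  have hsummable : Summable (fun j : ℕ =>
      (⌊(β + 1) / 2 * (τ^[j] z) + 1 / 2⌋ : ℝ) * (β ^ (j + 1))⁻¹) := by
    apply Summable.of_norm_bounded (g := fun j : ℕ => (β⁻¹) ^ j)
      (summable_geometric_of_lt_one (by positivity) (inv_lt_one_of_one_lt₀ hβ))
    intro j
    have hd : |(⌊(β + 1) / 2 * (τ^[j] z) + 1 / 2⌋ : ℝ)| ≤ 1 := by
      rcases hdig _ (horb j) with h | h | h <;> rw [h] <;> norm_num
    have hp : (0:ℝ) < β ^ (j + 1) := by positivity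
    have hpj : (0:ℝ) < β ^ j := by positivity
    rw [Real.norm_eq_abs, abs_mul, abs_inv, abs_pow, abs_of_pos hβ0, inv_pow]
    have h1 : (β ^ (j+1))⁻¹ ≤ (β ^ j)⁻¹ := by
      apply inv_anti₀ hpj
      calc β ^ j = β ^ j * 1 := by ring
        _ ≤ β ^ j * β := by nlinarith
        _ = β ^ (j + 1) := by ring
    calc |(⌊(β + 1) / 2 * (τ^[j] z) + 1 / 2⌋ : ℝ)| * (β ^ (j+1))⁻¹
        ≤ 1 * (β ^ (j+1))⁻¹ := by
          apply mul_le_mul_of_nonneg_right hd (by positivity)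
      _ = (β ^ (j+1))⁻¹ := by ring
      _ ≤ (β ^ j)⁻¹ := h1
  -- limit of partial sums
  have htend : Filter.Tendsto (fun n : ℕ => ∑ j ∈ Finset.range n,
      (⌊(β + 1) / 2 * (τ^[j] z) + 1 / 2⌋ : ℝ) * (β ^ (j + 1))⁻¹)
      Filter.atTop (nhds z) := by
    simp only [key]
    have h0 : Filter.Tendsto (fun n : ℕ => (β ^ n)⁻¹ * τ^[n] z) Filter.atTop (nhds 0) := by
      apply squeeze_zero_norm (fun n => ?_)
        (tendsto_pow_atTop_nhds_zero_of_lt_one (by positivity) (inv_lt_one_of_one_lt₀ hβ))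
      have hpj : (0:ℝ) < β ^ n := by positivity
      rw [Real.norm_eq_abs, abs_mul, abs_inv, abs_pow, abs_of_pos hβ0]
      calc (β ^ n)⁻¹ * |τ^[n] z| ≤ (β ^ n)⁻¹ * 1 :=
            mul_le_mul_of_nonneg_left (horb1 n) (by positivity)
        _ = (β ^ n)⁻¹ := by ring
        _ = (β⁻¹) ^ n := by rw [inv_pow]
    have := Filter.Tendsto.const_sub z h0
    simpa using this
  have hhs : HasSum (fun j : ℕ =>
      (⌊(β + 1) / 2 * (τ^[j] z) + 1 / 2⌋ : ℝ) * (β ^ (j + 1))⁻¹) z :=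
    (hsummable.hasSum_iff_tendsto_nat).mpr htend
  have heq : (fun j : ℕ => (⌊(β + 1) / 2 * (τ^[j] z) + 1 / 2⌋ : ℝ) * β ^ (-((j : ℤ) + 1)))
      = fun j : ℕ => (⌊(β + 1) / 2 * (τ^[j] z) + 1 / 2⌋ : ℝ) * (β ^ (j + 1))⁻¹ := by
    funext j
    rw [show -((j : ℤ) + 1) = -((j + 1 : ℕ) : ℤ) by push_cast; ring, zpow_neg, zpow_natCast]
  rw [heq]
  exact hhs.tsum_eq.symm
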